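/- Let G be a locally compact, second countable, Hausdorff topological group and let Λ ⊆ G be a closed subset with finite local complexity. Then the discrete hull Ω₀(Λ), with the subspace topology inherited from the Chabauty–Fell topology on 𝒞(G), is totally disconnected. -/

import Mathlib

open Set Filter Topology Pointwise

/-- The space `𝒞(G)` of closed subsets of a topological space `G`. -/
structure CFClosed (G : Type*) [TopologicalSpace G] where
  carrier : Set G
  isClosed' : IsClosed carrier

namespace CFClosed

variable {G : Type*} [TopologicalSpace G]

instance : SetLike (CFClosed G) G where
  coe := CFClosed.carrier
  coe_injective := fun P Q h => by cases P; cases Q; congr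

/-- The Chabauty–Fell topology on `𝒞(G)`, generated by the subbasis consisting of
`O_K = {C | C ∩ K = ∅}` for `K` compact and `O_U = {C | C ∩ U ≠ ∅}` for `U` open. -/
instance chabautyFell : TopologicalSpace (CFClosed G) :=
  TopologicalSpace.generateFrom
    ({s | ∃ K : Set G, IsCompact K ∧ s = {C : CFClosed G | (C : Set G) ∩ K = ∅}} ∪
     {s | ∃ U : Set G, IsOpen U ∧ s = {C : CFClosed G | ((C : Set G) ∩ U).Nonempty}})

end CFClosed
section Hulls

variable {G : Type*} [TopologicalSpace G] [Group G]

/-- The hull `Ω(Λ)` of a closed subset `Λ ⊆ G`: the closure in the Chabauty–Fell topology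
of the set of left translates of `Λ`. -/
def hull (Λ : CFClosed G) : Set (CFClosed G) :=
  closure {P : CFClosed G | ∃ g : G, (P : Set G) = g • (Λ : Set G)}

/-- The discrete hull `Ω₀(Λ)`: elements of the hull containing the identity. -/
def discreteHull (Λ : CFClosed G) : Set (CFClosed G) :=
  {P ∈ hull Λ | (1 : G) ∈ P}

/-- Finite local complexity: for every compact `K ⊆ G` there is a finite collection `𝓕` of
finite subsets of `G` such that every `P ∈ Ω₀(Λ)` satisfies `K ∩ P = h • F` for some
`h ∈ G`, `F ∈ 𝓕`. -/
def FLC (Λ : CFClosed G) : Prop :=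
  ∀ K : Set G, IsCompact K → ∃ 𝓕 : Set (Set G), 𝓕.Finite ∧ (∀ F ∈ 𝓕, F.Finite) ∧
    ∀ P ∈ discreteHull Λ, ∃ h : G, ∃ F ∈ 𝓕, K ∩ (P : Set G) = h • F

end Hulls

/-- Key separation lemma: if a preconnected subset of the discrete hull contains two
elements whose carriers differ at a point `x`, we get a contradiction. -/
lemma flc_key {G : Type*} [TopologicalSpace G] [Group G]
    [IsTopologicalGroup G] [LocallyCompactSpace G] [T2Space G]
    (Λ : CFClosed G) (hFLC : FLC Λ) (t : Set (CFClosed G))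
    (hts : t ⊆ discreteHull Λ) (ht : IsPreconnected t)
    (P Q : CFClosed G) (hP : P ∈ t) (hQ : Q ∈ t)
    (x : G) (hxP : x ∈ (P : Set G)) (hxQ : x ∉ (Q : Set G)) : False := by
  -- a compact neighborhood of x disjoint from Q
  obtain ⟨K, hKc, hxintK, hKQ⟩ :=
    exists_compact_subset (Q.isClosed'.isOpen_compl) hxQ
  -- FLC applied to `insert 1 K`
  obtain ⟨𝓕, h𝓕fin, h𝓕mem, hpat⟩ := hFLC (insert 1 K) (hKc.insert 1)
  set D : Set G := ⋃ F ∈ 𝓕, F⁻¹ * F with hDdef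
  have hDfin : D.Finite :=
    h𝓕fin.biUnion (fun F hF => ((h𝓕mem F hF).inv).mul (h𝓕mem F hF))
  -- every element of the discrete hull meets K only in D
  have hD : ∀ R ∈ discreteHull Λ, (R : Set G) ∩ K ⊆ D := by
    intro R hR y hy
    obtain ⟨h, F, hF𝓕, heq⟩ := hpat R hR
    have h1 : (1 : G) ∈ insert (1 : G) K ∩ (R : Set G) := ⟨mem_insert _ _, hR.2⟩
    rw [heq] at h1
    obtain ⟨f₀, hf₀, hf₀eq⟩ := h1
    have hyK : y ∈ insert (1 : G) K ∩ (R : Set G) := ⟨mem_insert_of_mem _ hy.2, hy.1⟩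
    rw [heq] at hyK
    obtain ⟨f, hf, hfeq⟩ := hyK
    have hh : h = f₀⁻¹ := eq_inv_of_mul_eq_one_left hf₀eq
    have : y = f₀⁻¹ * f := by
      rw [← hfeq, hh]; rfl
    refine mem_biUnion hF𝓕 ?_
    rw [this]
    exact mul_mem_mul (inv_mem_inv.mpr hf₀) hf
  -- shrink to a compact neighborhood of x avoiding D \ {x} and contained in interior K
  have hV''open : IsOpen (interior K \ (D \ {x})) :=
    isOpen_interior.sdiff ((hDfin.subset diff_subset).isClosed)
  have hxV'' : x ∈ interior K \ (D \ {x}) :=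
    ⟨hxintK, fun h => h.2 rfl⟩
  obtain ⟨L, hLc, hxintL, hLV''⟩ := exists_compact_subset hV''open hxV''
  set V : Set G := interior L with hVdef
  have hclV : closure V ⊆ L := closure_minimal interior_subset hLc.isClosed
  have hclVc : IsCompact (closure V) := hLc.of_isClosed_subset isClosed_closure hclV
  have hclVK : closure V ⊆ K := fun y hy => interior_subset (hLV'' (hclV hy)).1
  -- the two separating open sets
  set u : Set (CFClosed G) := {C : CFClosed G | ((C : Set G) ∩ V).Nonempty} with hudef
  set v : Set (CFClosed G) := {C : CFClosed G | (C : Set G) ∩ closure V = ∅} with hvdef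
  have hu : IsOpen u :=
    TopologicalSpace.isOpen_generateFrom_of_mem (Or.inr ⟨V, isOpen_interior, rfl⟩)
  have hv : IsOpen v :=
    TopologicalSpace.isOpen_generateFrom_of_mem (Or.inl ⟨closure V, hclVc, rfl⟩)
  have hcover : t ⊆ u ∪ v := by
    intro R hRt
    rcases ((R : Set G) ∩ V).eq_empty_or_nonempty with hemp | hne
    · right
      rw [hvdef, mem_setOf_eq, eq_empty_iff_forall_notMem]
      intro y hy
      have hyD : y ∈ D := hD R (hts hRt) ⟨hy.1, hclVK hy.2⟩
      have hyV'' : y ∈ interior K \ (D \ {x}) := hLV'' (hclV hy.2)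
      have hyx : y = x := by
        by_contra hne'
        exact hyV''.2 ⟨hyD, hne'⟩
      have hxV : x ∈ V := hxintL
      rw [hyx] at hy
      have hx' : x ∈ (R : Set G) ∩ V := ⟨hy.1, hxV⟩
      rw [hemp] at hx'
      exact absurd hx' (notMem_empty x)
    · left; exact hne
  have hPu : P ∈ t ∩ u := ⟨hP, ⟨x, hxP, hxintL⟩⟩
  have hQv : Q ∈ t ∩ v := by
    refine ⟨hQ, ?_⟩
    rw [hvdef, mem_setOf_eq, eq_empty_iff_forall_notMem]
    intro y hy
    exact hKQ (hclVK hy.2) hy.1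
  obtain ⟨C, _, hCu, hCv⟩ := ht u v hu hv hcover ⟨P, hPu⟩ ⟨Q, hQv⟩
  obtain ⟨y, hyC, hyV⟩ := hCu
  rw [hvdef, mem_setOf_eq, eq_empty_iff_forall_notMem] at hCv
  exact hCv y ⟨hyC, subset_closure hyV⟩

/-- For an FLC point set, the discrete hull is totally disconnected. -/
theorem discreteHull_totallyDisconnected (G : Type*) [TopologicalSpace G] [Group G]
    [IsTopologicalGroup G] [LocallyCompactSpace G] [SecondCountableTopology G] [T2Space G]
    (Λ : CFClosed G) (hFLC : FLC Λ) :
    IsTotallyDisconnected (discreteHull Λ) := by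
  intro t hts ht P hP Q hQ
  by_contra hne
  have hne' : (P : Set G) ≠ (Q : Set G) := fun h => hne (SetLike.coe_injective h)
  by_cases hsub : (P : Set G) ⊆ (Q : Set G)
  · obtain ⟨x, hxQ, hxP⟩ := Set.not_subset.mp
      (fun h2 => hne' (subset_antisymm hsub h2))
    exact flc_key Λ hFLC t hts ht Q P hQ hP x hxQ hxP
  · obtain ⟨x, hxP, hxQ⟩ := Set.not_subset.mp hsub
    exact flc_key Λ hFLC t hts ht P Q hP hQ x hxP hxQ
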